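/- Sanov's theorem for finite alphabets (Boltzmann's argument): let q be a probability distribution on a finite set X with q_i > 0 for all i, and let Y = (Y_i) be multinomially distributed with parameters n and q. Then for any probability vector p on X with np integer-valued, (1/n) log P(Y = np) = −D_KL(p‖q) + O(log n / n), where D_KL(p‖q) = Σ_i p_i log(p_i/q_i). In particular (1/n) log P(Y = np_n) → −D_KL(p‖q) whenever p_n are probability vectors with n p_n integer-valued and p_n → p. -/

import Mathlib

open Finset Real Filter

/-- Probability that a multinomial `(n, q)` vector equals `y`:
`n!/∏ y_i! · ∏ q_i^{y_i}`. -/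
noncomputable def multinomialProb {X : Type*} [Fintype X] (q : X → ℝ) (n : ℕ)
    (y : X → ℕ) : ℝ :=
  ((n.factorial : ℝ) / ∏ i, ((y i).factorial : ℝ)) * ∏ i, q i ^ y i

/-- Kullback–Leibler divergence on a finite set (natural log, `0 log 0 = 0`). -/
noncomputable def klDiv {X : Type*} [Fintype X] (p q : X → ℝ) : ℝ :=
  ∑ i, p i * Real.log (p i / q i)

lemma log_ratio_le (k : ℕ) (hk : 1 ≤ k) : Real.log ((k:ℝ)+1) - Real.log k ≤ 1/k := by
  have hk0 : (0:ℝ) < k := by exact_mod_cast hk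
  have h := Real.log_le_sub_one_of_pos (x := ((k:ℝ)+1)/k) (by positivity)
  rw [Real.log_div (by positivity) (ne_of_gt hk0)] at h
  have h2 : ((k:ℝ)+1)/k - 1 = 1/k := by field_simp; ring
  linarith

lemma le_log_ratio (k : ℕ) (hk : 1 ≤ k) : 1/((k:ℝ)+1) ≤ Real.log ((k:ℝ)+1) - Real.log k := by
  have hk0 : (0:ℝ) < k := by exact_mod_cast hk
  have h := Real.log_le_sub_one_of_pos (x := (k:ℝ)/((k:ℝ)+1)) (by positivity)
  rw [Real.log_div (ne_of_gt hk0) (by positivity)] at h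
  have h2 : (k:ℝ)/((k:ℝ)+1) - 1 = -(1/((k:ℝ)+1)) := by field_simp; ring
  linarith

lemma log_fact_lb (k : ℕ) (hk : 1 ≤ k) : (k:ℝ) * Real.log k - k + 1 ≤ Real.log (k.factorial) := by
  induction k with
  | zero => simp at hk
  | succ k ih =>
    rcases Nat.eq_zero_or_pos k with h0 | hk1
    · subst h0; simp
    · have hk0 : (0:ℝ) < k := by exact_mod_cast hk1
      have hlog : Real.log ((k+1).factorial) = Real.log ((k:ℝ)+1) + Real.log (k.factorial) := by
        rw [show ((k+1).factorial : ℝ) = ((k:ℝ)+1) * (k.factorial : ℝ) by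
          push_cast [Nat.factorial_succ]; ring, Real.log_mul (by positivity) (by positivity)]
      have h1 := log_ratio_le k hk1
      have h2 : (k:ℝ) * (Real.log ((k:ℝ)+1) - Real.log k) ≤ (k:ℝ) * (1/k) :=
        mul_le_mul_of_nonneg_left h1 (le_of_lt hk0)
      have h3 : (k:ℝ) * (1/k) = 1 := by field_simp
      have ih' := ih hk1
      push_cast [hlog]
      push_cast at ih'
      nlinarith

lemma log_fact_ub (k : ℕ) (hk : 1 ≤ k) :
    Real.log (k.factorial) ≤ (k:ℝ) * Real.log k - k + 1 + Real.log k := by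
  induction k with
  | zero => simp at hk
  | succ k ih =>
    rcases Nat.eq_zero_or_pos k with h0 | hk1
    · subst h0; simp
    · have hk0 : (0:ℝ) < k := by exact_mod_cast hk1
      have hlog : Real.log ((k+1).factorial) = Real.log ((k:ℝ)+1) + Real.log (k.factorial) := by
        rw [show ((k+1).factorial : ℝ) = ((k:ℝ)+1) * (k.factorial : ℝ) by
          push_cast [Nat.factorial_succ]; ring, Real.log_mul (by positivity) (by positivity)]
      have h1 := le_log_ratio k hk1
      have h2 : ((k:ℝ)+1) * (1/((k:ℝ)+1)) ≤ ((k:ℝ)+1) * (Real.log ((k:ℝ)+1) - Real.log k) :=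
        mul_le_mul_of_nonneg_left h1 (by positivity)
      have h3 : ((k:ℝ)+1) * (1/((k:ℝ)+1)) = 1 := by field_simp
      have ih' := ih hk1
      push_cast [hlog]
      push_cast at ih'
      nlinarith

lemma sanov_bound {X : Type*} [Fintype X] [Nonempty X]
    (q : X → ℝ) (hq : ∀ i, 0 < q i) (n : ℕ) (hn : 1 ≤ n) (y : X → ℕ) (hy : ∑ i, y i = n) :
    |Real.log (multinomialProb q n y) + (n:ℝ) * klDiv (fun i => (y i : ℝ) / n) q| ≤
      ((Fintype.card X : ℝ) / Real.log 2 + Fintype.card X + 1) * Real.log n := by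
  have hn0 : (0:ℝ) < n := by exact_mod_cast hn
  have hlogn : 0 ≤ Real.log n := Real.log_nonneg (by exact_mod_cast hn)
  -- log of the probability
  have hlogP : Real.log (multinomialProb q n y) =
      Real.log (n.factorial) - ∑ i, Real.log ((y i).factorial) + ∑ i, (y i : ℝ) * Real.log (q i) := by
    have hfact : (0:ℝ) < ∏ i, ((y i).factorial : ℝ) :=
      Finset.prod_pos (fun i _ => by exact_mod_cast (y i).factorial_pos)
    have hfn : (0:ℝ) < (n.factorial : ℝ) := by exact_mod_cast n.factorial_pos
    have hpq : (0:ℝ) < ∏ i, q i ^ y i := Finset.prod_pos (fun i _ => pow_pos (hq i) _)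
    unfold multinomialProb
    rw [Real.log_mul (by positivity) (ne_of_gt hpq),
      Real.log_div (ne_of_gt hfn) (ne_of_gt hfact),
      Real.log_prod (fun i _ => ne_of_gt (by exact_mod_cast (y i).factorial_pos)),
      Real.log_prod (fun i _ => ne_of_gt (pow_pos (hq i) _))]
    simp [Real.log_pow]
  -- n * klDiv
  have hkl : (n:ℝ) * klDiv (fun i => (y i : ℝ) / n) q =
      ∑ i, ((y i : ℝ) * Real.log (y i) - (y i : ℝ) * Real.log n - (y i : ℝ) * Real.log (q i)) := by
    unfold klDiv
    rw [Finset.mul_sum]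
    refine Finset.sum_congr rfl fun i _ => ?_
    rcases Nat.eq_zero_or_pos (y i) with h0 | h1
    · simp [h0]
    · have hyi : (0:ℝ) < y i := by exact_mod_cast h1
      rw [Real.log_div (by positivity) (ne_of_gt (hq i)),
        Real.log_div (ne_of_gt hyi) (ne_of_gt hn0)]
      field_simp
  have hsum : ∑ i, (y i : ℝ) = (n:ℝ) := by exact_mod_cast congrArg (Nat.cast : ℕ → ℝ) hy
  -- the combined expression
  have key : Real.log (multinomialProb q n y) + (n:ℝ) * klDiv (fun i => (y i : ℝ) / n) q =
      (Real.log (n.factorial) - (n:ℝ) * Real.log n + n) -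
        ∑ i, (Real.log ((y i).factorial) - (y i : ℝ) * Real.log (y i) + (y i : ℝ)) := by
    rw [hlogP, hkl]
    have h1 : ∑ i, ((y i : ℝ) * Real.log n) = (n:ℝ) * Real.log n := by
      rw [← Finset.sum_mul, hsum]
    simp only [Finset.sum_sub_distrib, Finset.sum_add_distrib, h1, hsum]
    ring
  set B : X → ℝ := fun i => Real.log ((y i).factorial) - (y i : ℝ) * Real.log (y i) + (y i : ℝ)
    with hB
  set s : Finset X := Finset.univ.filter (fun i => 0 < y i) with hs
  have hBsum : ∑ i, B i = ∑ i ∈ s, B i := by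
    symm
    apply Finset.sum_subset (Finset.filter_subset _ _)
    intro i _ hi
    have : y i = 0 := by
      by_contra h
      exact hi (Finset.mem_filter.mpr ⟨Finset.mem_univ i, Nat.pos_of_ne_zero h⟩)
    simp [hB, this]
  have hyle : ∀ i, y i ≤ n := by
    intro i
    rw [← hy]
    exact Finset.single_le_sum (fun j _ => Nat.zero_le _) (Finset.mem_univ i)
  have hBlb : ∀ i ∈ s, 1 ≤ B i := by
    intro i hi
    have h1 : 1 ≤ y i := (Finset.mem_filter.mp hi).2
    have := log_fact_lb (y i) h1
    simp only [hB]
    linarith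
  have hBub : ∀ i ∈ s, B i ≤ 1 + Real.log n := by
    intro i hi
    have h1 : 1 ≤ y i := (Finset.mem_filter.mp hi).2
    have h2 := log_fact_ub (y i) h1
    have h3 : Real.log (y i) ≤ Real.log n := by
      apply Real.log_le_log (by exact_mod_cast h1)
      exact_mod_cast hyle i
    simp only [hB]
    linarith
  have hcard1 : 1 ≤ s.card := by
    have hex : ∃ i, 0 < y i := by
      by_contra h
      push_neg at h
      simp only [Nat.le_zero] at h
      have : ∑ i, y i = 0 := Finset.sum_eq_zero (fun i _ => h i)
      omega
    obtain ⟨i, hi⟩ := hex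
    exact Finset.card_pos.mpr ⟨i, Finset.mem_filter.mpr ⟨Finset.mem_univ i, hi⟩⟩
  have hcardn : s.card ≤ n := by
    calc s.card = ∑ i ∈ s, 1 := by simp
    _ ≤ ∑ i ∈ s, y i := Finset.sum_le_sum (fun i hi => (Finset.mem_filter.mp hi).2)
    _ ≤ ∑ i, y i := Finset.sum_le_sum_of_subset (Finset.filter_subset _ _)
    _ = n := hy
  have hcardX : s.card ≤ Fintype.card X := Finset.card_filter_le _ _
  have hA1 : 1 ≤ Real.log (n.factorial) - (n:ℝ) * Real.log n + n := by
    have := log_fact_lb n hn; linarith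
  have hA2 : Real.log (n.factorial) - (n:ℝ) * Real.log n + n ≤ 1 + Real.log n := by
    have := log_fact_ub n hn; linarith
  have hsumlb : (s.card : ℝ) ≤ ∑ i ∈ s, B i := by
    calc (s.card : ℝ) = ∑ i ∈ s, (1:ℝ) := by simp
    _ ≤ ∑ i ∈ s, B i := Finset.sum_le_sum hBlb
  have hsumub : ∑ i ∈ s, B i ≤ (s.card : ℝ) * (1 + Real.log n) := by
    calc ∑ i ∈ s, B i ≤ ∑ i ∈ s, (1 + Real.log n) := Finset.sum_le_sum hBub
    _ = (s.card : ℝ) * (1 + Real.log n) := by rw [Finset.sum_const, nsmul_eq_mul]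
  -- card s - 1 ≤ (card X / log 2) * log n
  have hlog2 : (0:ℝ) < Real.log 2 := Real.log_pos (by norm_num)
  have hkey2 : (s.card : ℝ) - 1 ≤ ((Fintype.card X : ℝ) / Real.log 2) * Real.log n := by
    rcases eq_or_lt_of_le hn with h1 | h2
    · have : s.card ≤ 1 := le_trans hcardn h1.symm.le
      have h3 : (s.card : ℝ) ≤ 1 := by exact_mod_cast this
      have : (0:ℝ) ≤ ((Fintype.card X : ℝ) / Real.log 2) * Real.log n := by positivity
      linarith
    · have hn2 : (2:ℝ) ≤ n := by exact_mod_cast h2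
      have hl2 : Real.log 2 ≤ Real.log n := Real.log_le_log (by norm_num) hn2
      have hcX : (s.card : ℝ) ≤ (Fintype.card X : ℝ) := by exact_mod_cast hcardX
      have : (Fintype.card X : ℝ) = ((Fintype.card X : ℝ) / Real.log 2) * Real.log 2 := by
        field_simp
      calc (s.card : ℝ) - 1 ≤ (Fintype.card X : ℝ) := by linarith
      _ = ((Fintype.card X : ℝ) / Real.log 2) * Real.log 2 := this
      _ ≤ ((Fintype.card X : ℝ) / Real.log 2) * Real.log n := by
          apply mul_le_mul_of_nonneg_left hl2 (by positivity)
  have hcard1' : (1:ℝ) ≤ (s.card : ℝ) := by exact_mod_cast hcard1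
  have hsumlogub : ∑ i ∈ s, B i ≤ (s.card : ℝ) + (Fintype.card X : ℝ) * Real.log n := by
    have hcX : (s.card : ℝ) ≤ (Fintype.card X : ℝ) := by exact_mod_cast hcardX
    have : (s.card : ℝ) * (1 + Real.log n) = (s.card : ℝ) + (s.card : ℝ) * Real.log n := by ring
    nlinarith
  rw [key, hBsum, abs_le]
  constructor
  · -- lower bound
    have : -(((s.card : ℝ) - 1) + (Fintype.card X : ℝ) * Real.log n) ≤
        (Real.log (n.factorial) - (n:ℝ) * Real.log n + n) - ∑ i ∈ s, B i := by
      linarith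
    have h4 : ((s.card : ℝ) - 1) + (Fintype.card X : ℝ) * Real.log n ≤
        ((Fintype.card X : ℝ) / Real.log 2 + Fintype.card X + 1) * Real.log n := by
      nlinarith
    linarith
  · -- upper bound
    have h5 : (Real.log (n.factorial) - (n:ℝ) * Real.log n + n) - ∑ i ∈ s, B i ≤ Real.log n := by
      linarith
    have h6 : Real.log n ≤ ((Fintype.card X : ℝ) / Real.log 2 + Fintype.card X + 1) * Real.log n := by
      have hx0 : (0:ℝ) ≤ (Fintype.card X : ℝ) := Nat.cast_nonneg _
      have hd0 : (0:ℝ) ≤ (Fintype.card X : ℝ) / Real.log 2 := div_nonneg hx0 hlog2.le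
      nlinarith
    linarith

/-- Sanov's theorem for finite alphabets (Boltzmann's argument):
`(1/n) log P(Y = np) = −D_KL(p‖q) + O(log n / n)` uniformly over empirical
distributions `p` with `np` integer-valued, and consequently
`(1/n) log P(Y = n pₙ) → −D_KL(p‖q)` whenever `pₙ → p` pointwise. -/
theorem sanov_finite {X : Type*} [Fintype X] [Nonempty X]
    (q : X → ℝ) (hq : ∀ i, 0 < q i) (hq1 : ∑ i, q i = 1) :
    (∃ C : ℝ, 0 < C ∧ ∀ n : ℕ, 1 ≤ n → ∀ y : X → ℕ, ∑ i, y i = n →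
      |(1 / (n : ℝ)) * Real.log (multinomialProb q n y) +
          klDiv (fun i => (y i : ℝ) / n) q| ≤ C * Real.log n / n) ∧
    (∀ (p : X → ℝ), (∀ i, 0 ≤ p i) → ∑ i, p i = 1 →
      ∀ y : ℕ → X → ℕ, (∀ n, 1 ≤ n → ∑ i, y n i = n) →
      (∀ i, Tendsto (fun n : ℕ => (y n i : ℝ) / n) atTop (nhds (p i))) →
      Tendsto (fun n : ℕ => (1 / (n : ℝ)) * Real.log (multinomialProb q n (y n)))
        atTop (nhds (- klDiv p q))) := by
  set C : ℝ := (Fintype.card X : ℝ) / Real.log 2 + Fintype.card X + 1 with hC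
  have hlog2 : (0:ℝ) < Real.log 2 := Real.log_pos (by norm_num)
  have hC0 : 0 < C := by
    have hx0 : (0:ℝ) ≤ (Fintype.card X : ℝ) := Nat.cast_nonneg _
    have hd0 : (0:ℝ) ≤ (Fintype.card X : ℝ) / Real.log 2 := div_nonneg hx0 hlog2.le
    simp only [hC]; linarith
  have hbdd : ∀ n : ℕ, 1 ≤ n → ∀ y : X → ℕ, ∑ i, y i = n →
      |(1 / (n : ℝ)) * Real.log (multinomialProb q n y) +
          klDiv (fun i => (y i : ℝ) / n) q| ≤ C * Real.log n / n := by
    intro n hn y hy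
    have hn0 : (0:ℝ) < n := by exact_mod_cast hn
    have heq : (1 / (n : ℝ)) * Real.log (multinomialProb q n y) +
        klDiv (fun i => (y i : ℝ) / n) q =
        (Real.log (multinomialProb q n y) + (n:ℝ) * klDiv (fun i => (y i : ℝ) / n) q) / n := by
      field_simp
    rw [heq, abs_div, abs_of_pos hn0]
    exact (div_le_div_iff_of_pos_right hn0).mpr (sanov_bound q hq n hn y hy)
  refine ⟨⟨C, hC0, hbdd⟩, ?_⟩
  intro p hp hp1 y hy hty
  -- continuity of KL divergence along the sequence
  have htK : Tendsto (fun n : ℕ => klDiv (fun i => (y n i : ℝ) / n) q) atTop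
      (nhds (klDiv p q)) := by
    unfold klDiv
    apply tendsto_finset_sum
    intro i _
    have hrw : ∀ x : ℝ, x * Real.log (x / q i) = x * Real.log x - Real.log (q i) * x := by
      intro x
      rcases eq_or_ne x 0 with h | h
      · simp [h]
      · rw [Real.log_div h (ne_of_gt (hq i))]; ring
    have hcont : Continuous fun x : ℝ => x * Real.log x - Real.log (q i) * x :=
      Real.continuous_mul_log.sub (continuous_const.mul continuous_id)
    have := (hcont.tendsto (p i)).comp (hty i)
    rw [show (p i * Real.log (p i) - Real.log (q i) * (p i)) =
      p i * Real.log (p i / q i) from (hrw (p i)).symm] at this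
    exact this.congr (fun n => (hrw _).symm)
  -- the error term tends to zero
  have hzero : Tendsto (fun n : ℕ => (1 / (n : ℝ)) * Real.log (multinomialProb q n (y n)) +
      klDiv (fun i => (y n i : ℝ) / n) q) atTop (nhds 0) := by
    refine squeeze_zero_norm' (a := fun n : ℕ => C * Real.log n / n) ?_ ?_
    · filter_upwards [eventually_ge_atTop 1] with n hn
      rw [Real.norm_eq_abs]
      exact hbdd n hn (y n) (hy n hn)
    · have h1 : Tendsto (fun x : ℝ => Real.log x / x) atTop (nhds 0) :=
        Real.isLittleO_log_id_atTop.tendsto_div_nhds_zero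
      have h2 : Tendsto (fun n : ℕ => Real.log n / n) atTop (nhds 0) :=
        h1.comp tendsto_natCast_atTop_atTop
      have h3 := h2.const_mul C
      rw [mul_zero] at h3
      exact h3.congr (fun n => by rw [mul_div_assoc])
  have h := hzero.sub htK
  rw [zero_sub] at h
  exact h.congr (fun n => by ring)
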